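/- For every topological pair (X, Y) and every degree i, the change of coefficients homomorphism from H_i(X, Y; ℚ) to H_i(X, Y; ℝ) is norm-preserving with respect to the L¹-seminorms induced by the norms on ℚ-chains and ℝ-chains respectively. In particular, the ℓ¹-seminorm of a rational homology class equals the ℓ¹-seminorm of its image in real homology. -/

import Mathlib

/- Minimal development of singular chains, ℓ¹-norms, and relative homology seminorms. -/

open scoped BigOperators
noncomputable section

/-- The topological standard `n`-simplex. -/
abbrev TopSimplex (n : ℕ) : Type := (stdSimplex ℝ (Fin (n + 1)) : Set (Fin (n + 1) → ℝ))

/-- Singular `n`-simplices of a topological space `X`. -/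
abbrev SingularSimplex (n : ℕ) (X : Type*) [TopologicalSpace X] : Type _ :=
  C(TopSimplex n, X)

/-- The `i`-th face inclusion of the standard `n`-simplex into the standard `n+1`-simplex. -/
def faceIncl {n : ℕ} (i : Fin (n + 2)) : C(TopSimplex n, TopSimplex (n + 1)) where
  toFun x := ⟨i.insertNth 0 x.1, by
    constructor
    · intro j
      refine i.succAboveCases ?_ (fun j => ?_) j
      · simp
      · simpa using x.2.1 j
    · rw [Fin.sum_univ_succAbove _ i]
      simpa using x.2.2⟩
  continuous_toFun := by
    apply Continuous.subtype_mk
    refine continuous_pi fun j => ?_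
    refine i.succAboveCases (α := fun j => Continuous fun x : TopSimplex n =>
      Fin.insertNth (α := fun _ => ℝ) i 0 x.1 j) ?_ (fun j => ?_) j
    · simp only [Fin.insertNth_apply_same]
      exact continuous_const
    · simp only [Fin.insertNth_apply_succAbove]
      exact (continuous_apply _).comp continuous_subtype_val

/-- Singular `n`-chains of `X` with coefficients in `R`, as finitely supported functions
on singular simplices. -/
abbrev SingularChain (n : ℕ) (X : Type*) [TopologicalSpace X] (R : Type*) [Ring R] :
    Type _ := SingularSimplex n X →₀ R

variable {X : Type*} [TopologicalSpace X] {R : Type*}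

/-- The boundary operator on singular chains. -/
def chainBoundary [Ring R] : ∀ {n : ℕ}, SingularChain n X R → SingularChain (n - 1) X R
  | 0, _ => 0
  | (_ + 1), c =>
      c.sum fun σ a => ∑ i, Finsupp.single (σ.comp (faceIncl i)) (a * (-1) ^ (i : ℕ))

/-- A singular simplex is supported in the subspace `Y`. -/
def SimplexIn {n : ℕ} (Y : Set X) (σ : SingularSimplex n X) : Prop := Set.range σ ⊆ Y

open scoped Classical in
/-- The relative ℓ¹-norm of a chain: the sum of the absolute values of the coefficients
of the simplices not supported in `Y`. -/
def relNorm [NormedRing R] {n : ℕ} (Y : Set X) (c : SingularChain n X R) : ℝ :=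
  ∑ σ ∈ c.support, if SimplexIn Y σ then 0 else ‖c σ‖

/-- `c` is a relative cycle of the pair `(X, Y)`: its boundary is supported in `Y`. -/
def IsRelCycle [Ring R] {n : ℕ} (Y : Set X) (c : SingularChain n X R) : Prop :=
  ∀ σ, ¬ SimplexIn Y σ → chainBoundary c σ = 0

/-- The boundary operator on `(n+1)`-chains, with its natural target. -/
def chainBoundarySucc [Ring R] {n : ℕ} (c : SingularChain (n + 1) X R) :
    SingularChain n X R :=
  chainBoundary c

/-- Two relative chains are homologous in the pair `(X, Y)`: their difference is a
boundary, up to chains supported in `Y`.  In particular `[z] = [w]` in `H_n(X, Y; R)`. -/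
def RelHomologous [Ring R] {n : ℕ} (Y : Set X) (z w : SingularChain n X R) : Prop :=
  ∃ b : SingularChain (n + 1) X R, ∀ σ, ¬ SimplexIn Y σ → (z - w - chainBoundarySucc b) σ = 0

/-- The ℓ¹-seminorm of the relative homology class of the chain `z`:
the infimum of the relative ℓ¹-norms of the chains homologous to `z`. -/
def classNorm [NormedRing R] {n : ℕ} (Y : Set X) (z : SingularChain n X R) : ℝ :=
  sInf {r : ℝ | ∃ w : SingularChain n X R, RelHomologous Y z w ∧ r = relNorm Y w}

/-- Change of coefficients from rational chains to real chains. -/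
def chainToReal {n : ℕ} (c : SingularChain n X ℚ) : SingularChain n X ℝ :=
  c.mapRange Rat.cast (by simp)

/-- Change of coefficients from integral chains to real chains. -/
def intChainToReal {n : ℕ} (c : SingularChain n X ℤ) : SingularChain n X ℝ :=
  c.mapRange Int.cast (by simp)

/-- Pushforward of chains along a continuous map. -/
def chainMap [Ring R] {Y : Type*} [TopologicalSpace Y] {n : ℕ} (f : C(X, Y))
    (c : SingularChain n X R) : SingularChain n Y R :=
  c.sum fun σ a => Finsupp.single (f.comp σ) a

end

/- ### Auxiliary lemmas -/

noncomputable section Aux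

open scoped Classical

variable {X : Type*} [TopologicalSpace X] {R : Type*}

/-- The full ℓ¹-norm of a chain. -/
def fullNorm [NormedRing R] {n : ℕ} (c : SingularChain n X R) : ℝ :=
  ∑ σ ∈ c.support, ‖c σ‖

lemma relNorm_eq_sum_subset [NormedRing R] {n : ℕ} (Y : Set X) (c : SingularChain n X R)
    {s : Finset (SingularSimplex n X)} (hs : c.support ⊆ s) :
    relNorm Y c = ∑ σ ∈ s, if SimplexIn Y σ then 0 else ‖c σ‖ := by
  rw [relNorm]
  refine Finset.sum_subset hs fun σ _ hσ => ?_
  rw [Finsupp.notMem_support_iff.mp hσ]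
  simp

lemma fullNorm_eq_sum_subset [NormedRing R] {n : ℕ} (c : SingularChain n X R)
    {s : Finset (SingularSimplex n X)} (hs : c.support ⊆ s) :
    fullNorm c = ∑ σ ∈ s, ‖c σ‖ := by
  rw [fullNorm]
  refine Finset.sum_subset hs fun σ _ hσ => ?_
  rw [Finsupp.notMem_support_iff.mp hσ]
  simp

lemma relNorm_nonneg [NormedRing R] {n : ℕ} (Y : Set X) (c : SingularChain n X R) :
    0 ≤ relNorm Y c := by
  refine Finset.sum_nonneg fun σ _ => ?_
  split <;> positivity

lemma relNorm_le_fullNorm [NormedRing R] {n : ℕ} (Y : Set X) (c : SingularChain n X R) :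
    relNorm Y c ≤ fullNorm c := by
  refine Finset.sum_le_sum fun σ _ => ?_
  split
  · positivity
  · exact le_rfl

lemma relNorm_add_le [NormedRing R] {n : ℕ} (Y : Set X) (c d : SingularChain n X R) :
    relNorm Y (c + d) ≤ relNorm Y c + relNorm Y d := by
  rw [relNorm_eq_sum_subset Y (c + d) (Finsupp.support_add),
    relNorm_eq_sum_subset Y c (Finset.subset_union_left),
    relNorm_eq_sum_subset Y d (Finset.subset_union_right), ← Finset.sum_add_distrib]
  refine Finset.sum_le_sum fun σ _ => ?_
  split
  · simp
  · simpa using norm_add_le (c σ) (d σ)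

lemma relNorm_eq_of_eqOn [NormedRing R] {n : ℕ} (Y : Set X) {c d : SingularChain n X R}
    (h : ∀ σ, ¬ SimplexIn Y σ → c σ = d σ) : relNorm Y c = relNorm Y d := by
  rw [relNorm_eq_sum_subset Y c (Finset.subset_union_left (s₂ := d.support)),
    relNorm_eq_sum_subset Y d (Finset.subset_union_right (s₁ := c.support))]
  refine Finset.sum_congr rfl fun σ _ => ?_
  by_cases hσ : SimplexIn Y σ
  · rw [if_pos hσ, if_pos hσ]
  · rw [if_neg hσ, if_neg hσ, h σ hσ]

lemma fullNorm_single_le [NormedRing R] {n : ℕ} (σ : SingularSimplex n X) (a : R) :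
    fullNorm (Finsupp.single σ a) ≤ ‖a‖ := by
  rw [fullNorm_eq_sum_subset _ (Finsupp.support_single_subset)]
  simp

lemma fullNorm_add_le [NormedRing R] {n : ℕ} (c d : SingularChain n X R) :
    fullNorm (c + d) ≤ fullNorm c + fullNorm d := by
  rw [fullNorm_eq_sum_subset (c + d) (Finsupp.support_add),
    fullNorm_eq_sum_subset c (Finset.subset_union_left),
    fullNorm_eq_sum_subset d (Finset.subset_union_right), ← Finset.sum_add_distrib]
  refine Finset.sum_le_sum fun σ _ => ?_
  simpa using norm_add_le (c σ) (d σ)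

lemma fullNorm_sum_le [NormedRing R] {n : ℕ} {ι : Type*} (s : Finset ι)
    (f : ι → SingularChain n X R) :
    fullNorm (∑ x ∈ s, f x) ≤ ∑ x ∈ s, fullNorm (f x) := by
  classical
  induction s using Finset.cons_induction with
  | empty => simp [fullNorm]
  | cons a s ha ih =>
    rw [Finset.sum_cons, Finset.sum_cons]
    exact (fullNorm_add_le _ _).trans (by linarith)

lemma chainBoundarySucc_def [Ring R] {n : ℕ} (c : SingularChain (n + 1) X R) :
    chainBoundarySucc c =
      c.sum fun σ a => ∑ i, Finsupp.single (σ.comp (faceIncl i)) (a * (-1) ^ (i : ℕ)) := rfl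

lemma chainBoundarySucc_zero [Ring R] {n : ℕ} :
    chainBoundarySucc (0 : SingularChain (n + 1) X R) = 0 := by
  rw [chainBoundarySucc_def, Finsupp.sum_zero_index]

lemma chainBoundarySucc_single [Ring R] {n : ℕ} (σ : SingularSimplex (n + 1) X) (a : R) :
    chainBoundarySucc (Finsupp.single σ a) =
      ∑ i, Finsupp.single (σ.comp (faceIncl i)) (a * (-1) ^ (i : ℕ)) := by
  rw [chainBoundarySucc_def, Finsupp.sum_single_index]
  simp

lemma chainBoundarySucc_add [Ring R] {n : ℕ} (c d : SingularChain (n + 1) X R) :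
    chainBoundarySucc (c + d) = chainBoundarySucc c + chainBoundarySucc d := by
  rw [chainBoundarySucc_def, chainBoundarySucc_def, chainBoundarySucc_def,
    Finsupp.sum_add_index]
  · intro σ _
    simp
  · intro σ _ a b
    simp [add_mul, Finsupp.single_add, Finset.sum_add_distrib]

lemma chainBoundarySucc_sub [Ring R] {n : ℕ} (c d : SingularChain (n + 1) X R) :
    chainBoundarySucc (c - d) = chainBoundarySucc c - chainBoundarySucc d := by
  have h := chainBoundarySucc_add (c - d) d
  rw [sub_add_cancel] at h
  rw [h]
  exact (add_sub_cancel_right _ _).symm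

/-- `chainToReal` as an additive monoid hom. -/
def chainToRealHom {n : ℕ} : SingularChain n X ℚ →+ SingularChain n X ℝ :=
  Finsupp.mapRange.addMonoidHom (Rat.castHom ℝ).toAddMonoidHom

lemma chainToReal_eq_hom {n : ℕ} (c : SingularChain n X ℚ) :
    chainToReal c = chainToRealHom c := rfl

lemma chainToReal_apply {n : ℕ} (c : SingularChain n X ℚ) (σ : SingularSimplex n X) :
    chainToReal c σ = (c σ : ℝ) := rfl

lemma chainToReal_single {n : ℕ} (σ : SingularSimplex n X) (a : ℚ) :
    chainToReal (Finsupp.single σ a) = Finsupp.single σ (a : ℝ) := by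
  ext τ
  rw [chainToReal_apply, Finsupp.single_apply, Finsupp.single_apply]
  split <;> simp

lemma chainToReal_sub {n : ℕ} (c d : SingularChain n X ℚ) :
    chainToReal (c - d) = chainToReal c - chainToReal d := by
  rw [chainToReal_eq_hom, chainToReal_eq_hom, chainToReal_eq_hom, map_sub]

lemma chainToReal_boundary {n : ℕ} (c : SingularChain (n + 1) X ℚ) :
    chainToReal (chainBoundarySucc c) = chainBoundarySucc (chainToReal c) := by
  rw [chainToReal_eq_hom, chainBoundarySucc_def, map_finsuppSum]
  simp only [← chainToReal_eq_hom]
  rw [chainBoundarySucc_def, chainToReal, Finsupp.sum_mapRange_index]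
  · refine Finsupp.sum_congr fun σ _ => ?_
    rw [chainToReal_eq_hom, map_sum]
    simp only [← chainToReal_eq_hom]
    refine Finset.sum_congr rfl fun j _ => ?_
    show chainToReal _ = _
    rw [chainToReal_single]
    push_cast
    rfl
  · intro σ
    simp

lemma relNorm_chainToReal {n : ℕ} (Y : Set X) (c : SingularChain n X ℚ) :
    relNorm Y (chainToReal c) = relNorm Y c := by
  rw [relNorm, relNorm, chainToReal,
    Finsupp.support_mapRange_of_injective (by simp) c Rat.cast_injective]
  refine Finset.sum_congr rfl fun σ _ => ?_
  split
  · rfl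
  · rw [Finsupp.mapRange_apply, Rat.norm_cast_real]

lemma fullNorm_boundary_le {n : ℕ} (d : SingularChain (n + 1) X ℝ) :
    fullNorm (chainBoundarySucc d) ≤ (n + 2) * fullNorm d := by
  rw [chainBoundarySucc_def, Finsupp.sum, fullNorm]
  calc fullNorm (∑ σ ∈ d.support, ∑ j, Finsupp.single (σ.comp (faceIncl j)) (d σ * (-1) ^ (j : ℕ)))
      ≤ ∑ σ ∈ d.support, fullNorm (∑ j, Finsupp.single (σ.comp (faceIncl j)) (d σ * (-1) ^ (j : ℕ))) :=
        fullNorm_sum_le _ _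
    _ ≤ ∑ σ ∈ d.support, (n + 2) * ‖d σ‖ := by
        refine Finset.sum_le_sum fun σ _ => ?_
        calc fullNorm (∑ j, Finsupp.single (σ.comp (faceIncl j)) (d σ * (-1) ^ (j : ℕ)))
            ≤ ∑ j : Fin (n + 2), fullNorm (Finsupp.single (σ.comp (faceIncl j)) (d σ * (-1) ^ (j : ℕ))) :=
              fullNorm_sum_le _ _
          _ ≤ ∑ j : Fin (n + 2), ‖d σ‖ := by
              refine Finset.sum_le_sum fun j _ => ?_
              refine (fullNorm_single_le _ _).trans_eq ?_
              rw [norm_mul, norm_pow, norm_neg, norm_one, one_pow, mul_one]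
          _ = (n + 2) * ‖d σ‖ := by simp [mul_comm]
    _ = (n + 2) * ∑ σ ∈ d.support, ‖d σ‖ := by rw [Finset.mul_sum]

lemma relHomologous_refl [Ring R] {n : ℕ} (Y : Set X) (z : SingularChain n X R) :
    RelHomologous Y z z := by
  refine ⟨0, fun σ _ => ?_⟩
  rw [chainBoundarySucc_zero]
  simp

end Aux

/-- For every topological pair `(X, Y)` and every degree, the change of
coefficients homomorphism `H_i(X, Y; ℚ) → H_i(X, Y; ℝ)` is norm-preserving for the
ℓ¹-seminorms: the ℓ¹-seminorm of the class of a rational relative cycle `z` equals the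
ℓ¹-seminorm of the class of its image `chainToReal z` in real homology. -/
theorem rat_to_real_norm_preserving {X : Type*} [TopologicalSpace X] (Y : Set X)
    (i : ℕ) (z : SingularChain i X ℚ) (hz : IsRelCycle Y z) :
    classNorm Y (chainToReal z) = classNorm Y z := by
  classical
  set Sr := {r : ℝ | ∃ w : SingularChain i X ℝ,
    RelHomologous Y (chainToReal z) w ∧ r = relNorm Y w} with hSr
  set Sq := {r : ℝ | ∃ w : SingularChain i X ℚ,
    RelHomologous Y z w ∧ r = relNorm Y w} with hSq
  have e1 : classNorm Y (chainToReal z) = sInf Sr := rfl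
  have e2 : classNorm Y z = sInf Sq := rfl
  have hSr_ne : Sr.Nonempty :=
    ⟨relNorm Y (chainToReal z), chainToReal z, relHomologous_refl Y _, rfl⟩
  have hSq_ne : Sq.Nonempty := ⟨relNorm Y z, z, relHomologous_refl Y z, rfl⟩
  have hSr_bdd : BddBelow Sr := by
    refine ⟨0, fun r hr => ?_⟩
    obtain ⟨w, -, rfl⟩ := hr
    exact relNorm_nonneg Y w
  have hSq_bdd : BddBelow Sq := by
    refine ⟨0, fun r hr => ?_⟩
    obtain ⟨w, -, rfl⟩ := hr
    exact relNorm_nonneg Y w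
  have hsub : Sq ⊆ Sr := by
    rintro r ⟨w, ⟨b, hb⟩, rfl⟩
    refine ⟨chainToReal w, ⟨chainToReal b, fun σ hσ => ?_⟩, (relNorm_chainToReal Y w).symm⟩
    have hcast : (chainToReal z - chainToReal w - chainBoundarySucc (chainToReal b)) σ
        = ((z - w - chainBoundarySucc b) σ : ℝ) := by
      rw [← chainToReal_boundary, ← chainToReal_sub, ← chainToReal_sub, chainToReal_apply]
    rw [hcast, hb σ hσ, Rat.cast_zero]
  rw [e1, e2]
  refine le_antisymm (csInf_le_csInf hSr_bdd hSq_ne hsub) ?_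
  refine le_of_forall_pos_le_add fun ε hε => ?_
  obtain ⟨r, hrS, hrlt⟩ := Real.lt_sInf_add_pos hSr_ne (half_pos hε)
  obtain ⟨w, ⟨b, hb⟩, rfl⟩ := hrS
  have hw : relNorm Y w = relNorm Y (chainToReal z - chainBoundarySucc b) := by
    refine relNorm_eq_of_eqOn Y fun σ hσ => ?_
    have h0 := hb σ hσ
    simp only [Finsupp.sub_apply] at h0 ⊢
    linarith
  set m := (b.support.card : ℝ) with hm
  have hm0 : 0 ≤ m := Nat.cast_nonneg _
  set δ := ε / (2 * (i + 2) * (m + 1)) with hδdef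
  have hδ : 0 < δ := by positivity
  choose q hq using fun τ : SingularSimplex (i + 1) X => exists_rat_near (b τ) hδ
  set bq : SingularChain (i + 1) X ℚ := ∑ τ ∈ b.support, Finsupp.single τ (q τ) with hbq
  set w' : SingularChain i X ℚ := z - chainBoundarySucc bq with hw'def
  have hw' : RelHomologous Y z w' := by
    refine ⟨bq, fun σ _ => ?_⟩
    rw [hw'def, sub_sub_cancel, sub_self]
    rfl
  have step1 : sInf Sq ≤ relNorm Y w' := csInf_le hSq_bdd ⟨w', hw', rfl⟩
  have hbqv : ∀ τ ∈ b.support, bq τ = q τ := by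
    intro τ hτ
    rw [hbq, Finset.sum_apply']
    rw [Finset.sum_eq_single τ]
    · exact Finsupp.single_eq_same
    · intro τ' _ hne
      exact Finsupp.single_eq_of_ne hne.symm
    · intro h; exact absurd hτ h
  have hsupp : (b - chainToReal bq).support ⊆ b.support := by
    intro τ hτ
    by_contra hτ'
    have hb0 : b τ = 0 := Finsupp.notMem_support_iff.mp hτ'
    have hbq0 : bq τ = 0 := by
      rw [hbq, Finset.sum_apply']
      refine Finset.sum_eq_zero fun τ'' hτ'' => ?_
      refine Finsupp.single_eq_of_ne fun hne => ?_
      subst hne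
      exact hτ' hτ''
    have : (b - chainToReal bq) τ = 0 := by
      rw [Finsupp.sub_apply, hb0, chainToReal_apply, hbq0, Rat.cast_zero, sub_zero]
    exact Finsupp.mem_support_iff.mp hτ this
  have hfull : fullNorm (b - chainToReal bq) ≤ m * δ := by
    rw [fullNorm_eq_sum_subset _ hsupp]
    calc ∑ τ ∈ b.support, ‖(b - chainToReal bq) τ‖
        ≤ ∑ _τ ∈ b.support, δ := by
          refine Finset.sum_le_sum fun τ hτ => ?_
          rw [Finsupp.sub_apply, chainToReal_apply, hbqv τ hτ, Real.norm_eq_abs]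
          exact (hq τ).le
      _ = m * δ := by rw [Finset.sum_const, nsmul_eq_mul, hm]
  have hbound : relNorm Y (chainBoundarySucc (b - chainToReal bq)) ≤ ε / 2 := by
    refine (relNorm_le_fullNorm Y _).trans ?_
    refine (fullNorm_boundary_le _).trans ?_
    have hi2 : (0:ℝ) < (i:ℝ) + 2 := by positivity
    have h1 : (↑i + 2) * (m * δ) ≤ ε / 2 := by
      have e : ((i:ℝ) + 2) * (m * (ε / (2 * ((i:ℝ) + 2) * (m + 1))))
          = (((i:ℝ) + 2) * m * ε) / (2 * ((i:ℝ) + 2) * (m + 1)) := by ring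
      rw [hδdef, e, div_le_div_iff₀ (by positivity) two_pos]
      nlinarith [hε.le, hm0, hi2.le, mul_nonneg hε.le hi2.le]
    calc (↑i + 2) * fullNorm (b - chainToReal bq) ≤ (↑i + 2) * (m * δ) := by
          exact mul_le_mul_of_nonneg_left hfull (by positivity)
      _ ≤ ε / 2 := h1
  have e3 : relNorm Y w' = relNorm Y (chainToReal z - chainBoundarySucc (chainToReal bq)) := by
    rw [← relNorm_chainToReal Y w', hw'def, chainToReal_sub, chainToReal_boundary]
  have key : relNorm Y w' ≤ relNorm Y w + ε / 2 := by
    rw [e3, hw]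
    have hsplit : chainToReal z - chainBoundarySucc (chainToReal bq)
        = (chainToReal z - chainBoundarySucc b) + chainBoundarySucc (b - chainToReal bq) := by
      rw [chainBoundarySucc_sub]
      abel
    rw [hsplit]
    exact (relNorm_add_le Y _ _).trans (by linarith)
  linarith
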